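/- Let F be a face of the cone PSD_n of positive semidefinite n×n matrices containing a matrix P in its relative interior. Then F = {X ∈ PSD_n : ker P ⊆ ker X}, i.e., faces of the PSD cone are parametrized by kernels. -/

import Mathlib

open Matrix

lemma aux_dot_bound {N a x y : ℝ} (hx : x ^ 2 ≤ N) (hy : y ^ 2 ≤ N) :
    x * (a * y) ≤ |a| * N := by
  have h1 : x * (a * y) ≤ |a| * |x * y| := by
    calc x * (a * y) ≤ |x * (a * y)| := le_abs_self _
    _ = |a| * |x * y| := by rw [abs_mul, abs_mul, abs_mul]; ring
  have h2 : |x * y| ≤ N := by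
    rw [abs_mul]
    nlinarith [sq_nonneg (|x| - |y|), sq_abs x, sq_abs y, abs_nonneg x, abs_nonneg y]
  calc x * (a * y) ≤ |a| * |x * y| := h1
  _ ≤ |a| * N := by nlinarith [abs_nonneg a]

lemma exists_pos_smul_sub_posSemidef {n : ℕ} {P X : Matrix (Fin n) (Fin n) ℝ}
    (hP : P.PosSemidef) (hX : X.PosSemidef)
    (hker : ∀ v : Fin n → ℝ, P *ᵥ v = 0 → X *ᵥ v = 0) :
    ∃ ε : ℝ, 0 < ε ∧ (P - ε • X).PosSemidef := by
  classical
  set b : Fin n → (Fin n → ℝ) := fun i => (hP.1.eigenvectorBasis i : Fin n → ℝ) with hb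
  set lam : Fin n → ℝ := hP.1.eigenvalues with hlam
  have hlam_nonneg : ∀ i, 0 ≤ lam i := hP.eigenvalues_nonneg
  have hmv : ∀ i, P *ᵥ b i = lam i • b i := hP.1.mulVec_eigenvectorBasis
  have hbb : ∀ i j, b i ⬝ᵥ b j = if i = j then 1 else 0 := by
    intro i j
    have h := orthonormal_iff_ite.mp hP.1.eigenvectorBasis.orthonormal i j
    simpa [PiLp.inner_apply, RCLike.inner_apply, starRingEnd_apply, star_trivial,
      dotProduct, mul_comm] using h
  set I : Finset (Fin n) := Finset.univ.filter (fun i => lam i ≠ 0) with hI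
  set m : ℝ := if h : I.Nonempty then I.inf' h lam else 1 with hm
  have hm_pos : 0 < m := by
    rw [hm]
    split_ifs with h
    · rw [Finset.lt_inf'_iff]
      intro i hi
      have : lam i ≠ 0 := (Finset.mem_filter.mp hi).2
      exact lt_of_le_of_ne (hlam_nonneg i) (Ne.symm this)
    · exact one_pos
  have hm_le : ∀ i ∈ I, m ≤ lam i := by
    intro i hi
    rw [hm]
    rw [dif_pos ⟨i, hi⟩]
    exact Finset.inf'_le _ hi
  set C : ℝ := ∑ k, ∑ l, |X k l| with hC
  have hC_nonneg : 0 ≤ C := Finset.sum_nonneg fun k _ =>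
    Finset.sum_nonneg fun l _ => abs_nonneg _
  have hεXherm : ∀ e : ℝ, (e • X).IsHermitian := by
    intro e
    rw [Matrix.IsHermitian, conjTranspose_smul, star_trivial, hX.1.eq]
  refine ⟨m / (C + 1), div_pos hm_pos (by linarith),
    Matrix.PosSemidef.of_dotProduct_mulVec_nonneg ?_ ?_⟩
  · exact hP.1.sub (hεXherm _)
  intro v
  rw [star_trivial]
  set ε : ℝ := m / (C + 1) with hε
  have hε_pos : 0 < ε := div_pos hm_pos (by linarith)
  set c : Fin n → ℝ := fun i => b i ⬝ᵥ v with hc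
  have hv : v = ∑ i, c i • b i := by
    have h := hP.1.eigenvectorBasis.sum_repr' ((WithLp.equiv 2 (Fin n → ℝ)).symm v)
    have h2 := congrArg (WithLp.equiv 2 (Fin n → ℝ)) h
    simp only [PiLp.inner_apply, RCLike.inner_apply, starRingEnd_apply, star_trivial] at h2
    rw [Equiv.apply_symm_apply] at h2
    conv_lhs => rw [← h2]
    ext k
    simp [c, b, dotProduct, mul_comm, Finset.sum_apply]
  set u : Fin n → ℝ := ∑ i ∈ Iᶜ, c i • b i with hu
  set w : Fin n → ℝ := ∑ i ∈ I, c i • b i with hw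
  have hsum : ∀ (s : Finset (Fin n)), P *ᵥ (∑ i ∈ s, c i • b i) = ∑ i ∈ s, (c i * lam i) • b i := by
    intro s
    rw [show P *ᵥ (∑ i ∈ s, c i • b i) = P.mulVecLin (∑ i ∈ s, c i • b i) from rfl, map_sum]
    refine Finset.sum_congr rfl fun i _ => ?_
    rw [_root_.map_smul, mulVecLin_apply, hmv i, smul_smul]
  have hvuw : v = u + w := by
    rw [hu, hw, Finset.sum_compl_add_sum, ← hv]
  have hPu : P *ᵥ u = 0 := by
    rw [hu, hsum]
    refine Finset.sum_eq_zero fun i hi => ?_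
    have : lam i = 0 := by
      have := Finset.mem_compl.mp hi
      simp [hI] at this
      exact this
    simp [this]
  have hXu : X *ᵥ u = 0 := hker u hPu
  -- reduce quadratic form to w
  have hred : ∀ A : Matrix (Fin n) (Fin n) ℝ, A.IsHermitian → A *ᵥ u = 0 →
      v ⬝ᵥ (A *ᵥ v) = w ⬝ᵥ (A *ᵥ w) := by
    intro A hA h0
    have hsymm : Aᵀ = A := by
      ext i j
      have := congrFun (congrFun hA i) j
      simpa using this
    have huAw : u ⬝ᵥ (A *ᵥ w) = 0 := by
      rw [dotProduct_mulVec, ← mulVec_transpose, hsymm, h0, zero_dotProduct]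
    rw [hvuw]
    rw [mulVec_add, h0, zero_add, add_dotProduct, huAw, zero_add]
  -- compute w ⬝ᵥ P *ᵥ w
  have hdot : ∀ (d : Fin n → ℝ), w ⬝ᵥ (∑ j ∈ I, d j • b j) = ∑ j ∈ I, c j * d j := by
    intro d
    have sum_dot : ∀ (f : Fin n → (Fin n → ℝ)) (g : Fin n → ℝ),
        (∑ i ∈ I, f i) ⬝ᵥ g = ∑ i ∈ I, f i ⬝ᵥ g := by
      intro f g
      simp only [dotProduct, Finset.sum_apply, Finset.sum_mul]
      exact Finset.sum_comm
    have dot_sum : ∀ (g : Fin n → ℝ) (f : Fin n → (Fin n → ℝ)),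
        g ⬝ᵥ (∑ j ∈ I, f j) = ∑ j ∈ I, g ⬝ᵥ f j := by
      intro g f
      simp only [dotProduct, Finset.sum_apply, Finset.mul_sum]
      exact Finset.sum_comm
    rw [hw, sum_dot]
    refine Finset.sum_congr rfl fun i hi => ?_
    rw [smul_dotProduct, dot_sum, Finset.sum_eq_single i]
    · rw [dotProduct_smul, hbb i i, if_pos rfl]
      simp [smul_eq_mul, mul_comm]
    · intro j hj hji
      rw [dotProduct_smul, hbb i j, if_neg (Ne.symm hji)]
      simp
    · intro h; exact absurd hi h
  have hPw : w ⬝ᵥ (P *ᵥ w) = ∑ i ∈ I, lam i * c i ^ 2 := by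
    rw [hw, hsum, ← hw, hdot]
    refine Finset.sum_congr rfl fun i _ => by ring
  set N : ℝ := ∑ i ∈ I, c i ^ 2 with hN
  have hN_nonneg : 0 ≤ N := Finset.sum_nonneg fun i _ => sq_nonneg _
  have hww : w ⬝ᵥ w = N := by
    rw [show w ⬝ᵥ w = w ⬝ᵥ (∑ i ∈ I, c i • b i) from by rw [← hw], hdot]
    exact Finset.sum_congr rfl fun i _ => by ring
  have hwk : ∀ k, w k ^ 2 ≤ N := by
    intro k
    rw [← hww]
    have : w ⬝ᵥ w = ∑ j, w j ^ 2 := by simp [dotProduct, sq]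
    rw [this]
    exact Finset.single_le_sum (fun j _ => sq_nonneg (w j)) (Finset.mem_univ k)
  have hXw : w ⬝ᵥ (X *ᵥ w) ≤ C * N := by
    have expand : w ⬝ᵥ (X *ᵥ w) = ∑ k, ∑ l, w k * (X k l * w l) := by
      simp [dotProduct, mulVec, Finset.mul_sum]
    rw [expand, hC, Finset.sum_mul]
    refine Finset.sum_le_sum fun k _ => ?_
    rw [Finset.sum_mul]
    exact Finset.sum_le_sum fun l _ => aux_dot_bound (hwk k) (hwk l)
  have hPw_ge : m * N ≤ w ⬝ᵥ (P *ᵥ w) := by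
    rw [hPw, hN, Finset.mul_sum]
    exact Finset.sum_le_sum fun i hi =>
      mul_le_mul_of_nonneg_right (hm_le i hi) (sq_nonneg _)
  have hεC : ε * C ≤ m := by
    rw [hε, div_mul_eq_mul_div, div_le_iff₀ (by linarith)]
    nlinarith
  have hfinal : v ⬝ᵥ ((P - ε • X) *ᵥ v) = v ⬝ᵥ (P *ᵥ v) - ε * (v ⬝ᵥ (X *ᵥ v)) := by
    rw [sub_mulVec, dotProduct_sub, smul_mulVec, dotProduct_smul, smul_eq_mul]
  rw [hfinal, hred P hP.1 hPu, hred X hX.1 hXu]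
  have h1 : ε * (w ⬝ᵥ (X *ᵥ w)) ≤ ε * (C * N) := by
    exact mul_le_mul_of_nonneg_left hXw hε_pos.le
  nlinarith

theorem face_of_psd_cone_parametrized_by_kernel {n : ℕ}
    (F : Set (Matrix (Fin n) (Fin n) ℝ))
    (hFsub : ∀ X ∈ F, X.PosSemidef)
    (hFcone : ∀ X ∈ F, ∀ c : ℝ, 0 ≤ c → c • X ∈ F)
    (hFconvex : ∀ X ∈ F, ∀ Y ∈ F, X + Y ∈ F)
    (hface : ∀ X Y : Matrix (Fin n) (Fin n) ℝ,
      X.PosSemidef → Y.PosSemidef → X + Y ∈ F → X ∈ F ∧ Y ∈ F)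
    (P : Matrix (Fin n) (Fin n) ℝ) (hP : P ∈ F)
    (hrelint : ∀ X ∈ F, ∃ μ : ℝ, 1 < μ ∧ μ • P + (1 - μ) • X ∈ F) :
    F = {X | X.PosSemidef ∧ ∀ v : Fin n → ℝ, P *ᵥ v = 0 → X *ᵥ v = 0} := by
  ext X
  simp only [Set.mem_setOf_eq]
  constructor
  · intro hXF
    have hXpsd := hFsub X hXF
    refine ⟨hXpsd, fun v hv => ?_⟩
    obtain ⟨μ, hμ, hY⟩ := hrelint X hXF
    have hYpsd := hFsub _ hY
    have h1 := hYpsd.dotProduct_mulVec_nonneg v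
    rw [star_trivial] at h1
    have hq : v ⬝ᵥ ((μ • P + (1 - μ) • X) *ᵥ v) = (1 - μ) * (v ⬝ᵥ (X *ᵥ v)) := by
      rw [add_mulVec, dotProduct_add, smul_mulVec, smul_mulVec,
        dotProduct_smul, dotProduct_smul, hv]
      simp
    rw [hq] at h1
    have h2 := hXpsd.dotProduct_mulVec_nonneg v
    rw [star_trivial] at h2
    have hq0 : v ⬝ᵥ (X *ᵥ v) = 0 := by nlinarith
    have h3 := hXpsd.dotProduct_mulVec_zero_iff v
    rw [star_trivial] at h3
    exact h3.mp hq0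
  · rintro ⟨hXpsd, hkerX⟩
    obtain ⟨ε, hε, hPsub⟩ := exists_pos_smul_sub_posSemidef (hFsub P hP) hXpsd hkerX
    have hεX : (ε • X).PosSemidef := by
      refine Matrix.PosSemidef.of_dotProduct_mulVec_nonneg ?_ fun x => ?_
      · rw [Matrix.IsHermitian, conjTranspose_smul, star_trivial, hXpsd.1.eq]
      · rw [smul_mulVec, dotProduct_smul, smul_eq_mul]
        exact mul_nonneg hε.le (hXpsd.dotProduct_mulVec_nonneg x)
    have hsum : (P - ε • X) + ε • X ∈ F := by
      rw [sub_add_cancel]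
      exact hP
    have hmem := (hface _ _ hPsub hεX hsum).2
    have hfin := hFcone _ hmem ε⁻¹ (inv_nonneg.mpr hε.le)
    rwa [smul_smul, inv_mul_cancel₀ hε.ne', one_smul] at hfin
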